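/- For all α with 0 ≤ α ≤ 1, the function f_G(α) := 1/2 + (1/2)α²⌊1/α⌋² + (1/2)α²⌊1/α⌋ − α⌊1/α⌋ (with f_G(0) := 0) satisfies f_G(α) ≤ α/2, with equality exactly when α = 0 or α = 1/j for some integer j ≥ 1. -/

import Mathlib

noncomputable def fG (α : ℝ) : ℝ :=
  if α = 0 then 0 else
    1 / 2 + 1 / 2 * α ^ 2 * (⌊1 / α⌋ : ℝ) ^ 2 + 1 / 2 * α ^ 2 * (⌊1 / α⌋ : ℝ)
      - α * (⌊1 / α⌋ : ℝ)

theorem fG_le_half_alpha (α : ℝ) (h0 : 0 ≤ α) (h1 : α ≤ 1) :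
    fG α ≤ α / 2 ∧ (fG α = α / 2 ↔ α = 0 ∨ ∃ j : ℕ, 1 ≤ j ∧ α = 1 / (j : ℝ)) := by
  rcases eq_or_lt_of_le h0 with h | hpos
  · simp [fG, ← h]
  have hα : α ≠ 0 := ne_of_gt hpos
  set n := ⌊1 / α⌋ with hn
  have h1a : (1 : ℝ) ≤ 1 / α := by
    rw [le_div_iff₀ hpos]; linarith
  have hfl : (n : ℝ) ≤ 1 / α := Int.floor_le _
  have hfu : 1 / α < n + 1 := Int.lt_floor_add_one _
  have hn1 : (1 : ℤ) ≤ n := by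
    rw [hn]; exact Int.le_floor.mpr (by exact_mod_cast h1a)
  have hfl' : (n : ℝ) * α ≤ 1 := (le_div_iff₀ hpos).mp hfl
  have hfu' : (1 : ℝ) < ((n : ℝ) + 1) * α := (div_lt_iff₀ hpos).mp hfu
  have key : fG α - α / 2 = 1 / 2 * (1 - α * n) * (1 - α * (n + 1)) := by
    simp only [fG, if_neg hα, ← hn]; ring
  have h1n : 0 ≤ 1 - α * n := by nlinarith
  have h2n : 1 - α * (n + 1) < 0 := by nlinarith
  have hle : fG α ≤ α / 2 := by nlinarith
  refine ⟨hle, ?_, ?_⟩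
  · intro heq
    right
    have hprod : 1 / 2 * (1 - α * n) * (1 - α * (n + 1)) = 0 := by linarith
    have hzero : 1 - α * (n : ℝ) = 0 := by
      rcases mul_eq_zero.mp hprod with h | h
      · rcases mul_eq_zero.mp h with h | h
        · norm_num at h
        · exact h
      · linarith
    refine ⟨n.toNat, ?_, ?_⟩
    · omega
    · have hcast : ((n.toNat : ℕ) : ℝ) = (n : ℝ) := by
        exact_mod_cast congrArg Int.cast (Int.toNat_of_nonneg (by omega))
      rw [hcast]
      have hnne : (n : ℝ) ≠ 0 := by positivity
      field_simp
      linarith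
  · rintro (h | ⟨j, hj1, hj⟩)
    · exact absurd h hα
    have hjR : (1 : ℝ) ≤ (j : ℝ) := by exact_mod_cast hj1
    have hjne : (j : ℝ) ≠ 0 := by positivity
    have hinv : 1 / α = (j : ℝ) := by rw [hj, one_div_one_div]
    have hfloor : n = (j : ℤ) := by
      rw [hn, hinv]; exact_mod_cast Int.floor_natCast j
    have : fG α - α / 2 = 0 := by
      rw [key, hfloor, hj]
      push_cast
      field_simp
      ring
    linarith
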